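/- arXiv:math/0601099 — 2 statements merged into one kernel-verified Lean document; each statement's English description precedes it below -/
import Mathlib

section
/- For all θ₀, θ ∈ ℝ^Λ, with b = exp(‖log f_{θ₀}‖_∞), the Kullback–Leibler distance within the exponential family satisfies the lower bound Δ(f_{θ₀}; f_{θ}) ≥ (1/(2b))·e^{−A‖θ₀−θ‖₂}·‖θ₀ − θ‖₂². -/
open MeasureTheory

lemma key_half (t : ℝ) (ht : 0 ≤ t) : t ^ 2 / 2 ≤ (t - 1) * Real.exp t + 1 := by
  rcases le_or_gt t 1 with h1 | h1
  · have hb := Real.exp_bound (x := t) (by rw [abs_of_nonneg ht]; exact h1) (n := 3) (by norm_num)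
    rw [abs_of_nonneg ht] at hb
    simp [Finset.sum_range_succ, Nat.factorial] at hb
    have hb' := (abs_le.1 hb).2
    have hlow : t + 1 ≤ Real.exp t := Real.add_one_le_exp t
    nlinarith [sq_nonneg t, sq_nonneg (1-t), pow_nonneg ht 3, pow_nonneg ht 4]
  · have hlow := Real.sum_le_exp_of_nonneg ht 4
    simp [Finset.sum_range_succ, Nat.factorial] at hlow
    nlinarith [hlow]

lemma key (t : ℝ) : t ^ 2 / 2 * Real.exp (-|t|) ≤ t - 1 + Real.exp (-t) := by
  rcases le_or_gt 0 t with ht | ht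
  · rw [abs_of_nonneg ht]
    have h := key_half t ht
    have hp := Real.exp_pos t
    rw [Real.exp_neg, inv_eq_one_div]
    calc t ^ 2 / 2 * (1 / Real.exp t) ≤ ((t - 1) * Real.exp t + 1) * (1 / Real.exp t) :=
          mul_le_mul_of_nonneg_right h (by positivity)
      _ = t - 1 + 1 / Real.exp t := by field_simp
  · rw [abs_of_neg ht, neg_neg]
    have hs : 0 ≤ -t := by linarith
    have hlow := Real.sum_le_exp_of_nonneg hs 3
    simp [Finset.sum_range_succ, Nat.factorial] at hlow
    have h1 : Real.exp t ≤ 1 := Real.exp_le_one_iff.mpr ht.le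
    nlinarith [mul_le_mul_of_nonneg_left h1 (by positivity : (0:ℝ) ≤ t^2/2)]

/-- Lemma A.2, second assertion: with `b = exp(‖log f_{θ₀}‖_∞)`, the Kullback–Leibler
distance within the exponential family satisfies
`Δ(f_{θ₀}; f_θ) ≥ (1/(2b))·e^{−A‖θ₀−θ‖₂}·‖θ₀ − θ‖₂²`. -/
theorem expFamily_kl_lower_bound
    {E : Type*} [MeasurableSpace E] (μ : Measure E) [IsFiniteMeasure μ]
    {Λ : Type*} [Fintype Λ] [DecidableEq Λ] (ψ : Λ → E → ℝ)
    (hmeas : ∀ l, Measurable (ψ l))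
    (hbdd : ∀ l, ∃ C : ℝ, ∀ x, |ψ l x| ≤ C)
    (horth : ∀ l k, ∫ x, ψ l x * ψ k x ∂μ = if l = k then (1 : ℝ) else 0)
    (A : ℝ) (hApos : 0 < A)
    (hA : ∀ c : Λ → ℝ, ∀ x, |∑ l, c l * ψ l x| ≤
      A * Real.sqrt (∫ y, (∑ l, c l * ψ l y) ^ 2 ∂μ))
    (θ₀ θ : Λ → ℝ) :
    (1 / (2 * Real.exp (⨆ x, |∑ l, θ₀ l * ψ l x|))) *
        Real.exp (-(A * Real.sqrt (∑ l, (θ₀ l - θ l) ^ 2))) * (∑ l, (θ₀ l - θ l) ^ 2) ≤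
      ∫ x, (Real.exp (∑ l, θ₀ l * ψ l x) *
          Real.log (Real.exp (∑ l, θ₀ l * ψ l x) / Real.exp (∑ l, θ l * ψ l x)) -
          Real.exp (∑ l, θ₀ l * ψ l x) + Real.exp (∑ l, θ l * ψ l x)) ∂μ := by
  classical
  -- bounds on ψ
  choose C hC using hbdd
  set D : Λ → ℝ := fun l => max (C l) 0 with hD
  have hDnn : ∀ l, 0 ≤ D l := fun l => le_max_right _ _
  have hDb : ∀ l x, |ψ l x| ≤ D l := fun l x => (hC l x).trans (le_max_left _ _)
  set S : ℝ := ∑ l, (θ₀ l - θ l) ^ 2 with hS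
  set M : ℝ := ⨆ x, |∑ l, θ₀ l * ψ l x| with hM
  set R : ℝ := A * Real.sqrt S with hR
  have hRnn : 0 ≤ R := mul_nonneg hApos.le (Real.sqrt_nonneg _)
  set g : E → ℝ := fun x => ∑ l, (θ₀ l - θ l) * ψ l x with hg
  set u : E → ℝ := fun x => ∑ l, θ₀ l * ψ l x with hu
  set v : E → ℝ := fun x => ∑ l, θ l * ψ l x with hv
  have hgmeas : Measurable g := Finset.measurable_sum _ fun l _ => (hmeas l).const_mul _
  have humeas : Measurable u := Finset.measurable_sum _ fun l _ => (hmeas l).const_mul _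
  have hvmeas : Measurable v := Finset.measurable_sum _ fun l _ => (hmeas l).const_mul _
  -- integrability of products
  have hint : ∀ l k, Integrable (fun x => ψ l x * ψ k x) μ := by
    intro l k
    refine (integrable_const (D l * D k)).mono'
      ((hmeas l).mul (hmeas k)).aestronglyMeasurable (ae_of_all _ fun x => ?_)
    rw [Real.norm_eq_abs, abs_mul]
    exact mul_le_mul (hDb l x) (hDb k x) (abs_nonneg _) (hDnn l)
  -- ∫ g² = S
  have hg2pt : ∀ x, (g x) ^ 2 =
      ∑ l, ∑ k, ((θ₀ l - θ l) * (θ₀ k - θ k)) * (ψ l x * ψ k x) := by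
    intro x
    rw [hg, sq, Finset.sum_mul_sum]
    exact Finset.sum_congr rfl fun l _ => Finset.sum_congr rfl fun k _ => by ring
  have hIg2 : ∫ x, (g x) ^ 2 ∂μ = S := by
    simp_rw [hg2pt]
    rw [integral_finset_sum _ (fun l _ => integrable_finset_sum _
      (fun k _ => (hint l k).const_mul _))]
    rw [hS]
    refine Finset.sum_congr rfl fun l _ => ?_
    rw [integral_finset_sum _ (fun k _ => (hint l k).const_mul _)]
    have : ∀ k, (∫ x, ((θ₀ l - θ l) * (θ₀ k - θ k)) * (ψ l x * ψ k x) ∂μ) =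
        ((θ₀ l - θ l) * (θ₀ k - θ k)) * (if l = k then (1:ℝ) else 0) := by
      intro k; rw [integral_const_mul, horth]
    simp only [this, mul_ite, mul_one, mul_zero]
    rw [Finset.sum_ite_eq Finset.univ l fun k => (θ₀ l - θ l) * (θ₀ k - θ k)]
    simp [sq]
  -- pointwise bound |g x| ≤ R
  have hgR : ∀ x, |g x| ≤ R := by
    intro x
    have h := hA (fun l => θ₀ l - θ l) x
    calc |g x| ≤ A * Real.sqrt (∫ y, (∑ l, (θ₀ l - θ l) * ψ l y) ^ 2 ∂μ) := h
      _ = R := by rw [hR]; congr 1; rw [show (∫ y, (∑ l, (θ₀ l - θ l) * ψ l y) ^ 2 ∂μ) = ∫ x, (g x) ^ 2 ∂μ from rfl, hIg2]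
  -- bound on u
  have hub : ∀ x, |u x| ≤ ∑ l, |θ₀ l| * D l := by
    intro x
    calc |u x| ≤ ∑ l, |θ₀ l * ψ l x| := Finset.abs_sum_le_sum_abs _ _
      _ ≤ ∑ l, |θ₀ l| * D l := Finset.sum_le_sum fun l _ => by
          rw [abs_mul]; exact mul_le_mul_of_nonneg_left (hDb l x) (abs_nonneg _)
  have hMb : ∀ x, |u x| ≤ M := by
    intro x
    exact le_ciSup ⟨∑ l, |θ₀ l| * D l, by rintro _ ⟨y, rfl⟩; exact hub y⟩ x
  -- pointwise identity
  have hpt : ∀ x, Real.exp (u x) * Real.log (Real.exp (u x) / Real.exp (v x)) -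
      Real.exp (u x) + Real.exp (v x) = Real.exp (u x) * (g x - 1 + Real.exp (-(g x))) := by
    intro x
    have h2 : g x = u x - v x := by
      simp only [hg, hu, hv, ← Finset.sum_sub_distrib, sub_mul]
    have h1 : Real.log (Real.exp (u x) / Real.exp (v x)) = g x := by
      rw [← Real.exp_sub, Real.log_exp, h2]
    have h3 : Real.exp (v x) = Real.exp (u x) * Real.exp (-(g x)) := by
      rw [← Real.exp_add]; congr 1; rw [h2]; ring
    rw [h1, h3]; ring
  -- pointwise lower bound
  have hlow : ∀ x, (Real.exp (-M) * Real.exp (-R) / 2) * (g x) ^ 2 ≤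
      Real.exp (u x) * (g x - 1 + Real.exp (-(g x))) := by
    intro x
    have k1 := key (g x)
    have k2 : Real.exp (-R) ≤ Real.exp (-|g x|) := Real.exp_le_exp.mpr (neg_le_neg (hgR x))
    have k3 : Real.exp (-M) ≤ Real.exp (u x) :=
      Real.exp_le_exp.mpr (neg_le_of_abs_le (hMb x))
    calc (Real.exp (-M) * Real.exp (-R) / 2) * (g x) ^ 2
        = Real.exp (-M) * ((g x) ^ 2 / 2 * Real.exp (-R)) := by ring
      _ ≤ Real.exp (-M) * ((g x) ^ 2 / 2 * Real.exp (-|g x|)) := by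
          apply mul_le_mul_of_nonneg_left _ (Real.exp_pos _).le
          exact mul_le_mul_of_nonneg_left k2 (by positivity)
      _ ≤ Real.exp (u x) * ((g x) ^ 2 / 2 * Real.exp (-|g x|)) := by
          apply mul_le_mul_of_nonneg_right k3 (by positivity)
      _ ≤ Real.exp (u x) * (g x - 1 + Real.exp (-(g x))) :=
          mul_le_mul_of_nonneg_left k1 (Real.exp_pos _).le
  -- integrability of the upper function
  have hFmeas : Measurable (fun x => Real.exp (u x) * (g x - 1 + Real.exp (-(g x)))) :=
    humeas.exp.mul ((hgmeas.sub measurable_const).add hgmeas.neg.exp)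
  have hFint : Integrable (fun x => Real.exp (u x) * (g x - 1 + Real.exp (-(g x)))) μ := by
    refine (integrable_const (Real.exp (∑ l, |θ₀ l| * D l) * (R + 1 + Real.exp R))).mono'
      hFmeas.aestronglyMeasurable (ae_of_all _ fun x => ?_)
    rw [Real.norm_eq_abs, abs_mul, abs_of_pos (Real.exp_pos _)]
    have hgx := abs_le.1 (hgR x)
    have he1 : Real.exp (-(g x)) ≤ Real.exp R := Real.exp_le_exp.mpr (by linarith)
    have he2 : (0:ℝ) < Real.exp (-(g x)) := Real.exp_pos _
    have habs : |g x - 1 + Real.exp (-(g x))| ≤ R + 1 + Real.exp R :=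
      abs_le.2 ⟨by nlinarith, by nlinarith⟩
    exact mul_le_mul (Real.exp_le_exp.mpr (le_of_abs_le (hub x))) habs (abs_nonneg _)
      (Real.exp_pos _).le
  -- conclude
  have hIeq : (∫ x, (Real.exp (u x) * Real.log (Real.exp (u x) / Real.exp (v x)) -
      Real.exp (u x) + Real.exp (v x)) ∂μ) =
      ∫ x, Real.exp (u x) * (g x - 1 + Real.exp (-(g x))) ∂μ :=
    integral_congr_ae (ae_of_all _ hpt)
  have hmono : (∫ x, (Real.exp (-M) * Real.exp (-R) / 2) * (g x) ^ 2 ∂μ) ≤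
      ∫ x, Real.exp (u x) * (g x - 1 + Real.exp (-(g x))) ∂μ :=
    integral_mono_of_nonneg (ae_of_all _ fun x => by positivity) hFint (ae_of_all _ hlow)
  have hIlow : (∫ x, (Real.exp (-M) * Real.exp (-R) / 2) * (g x) ^ 2 ∂μ) =
      (Real.exp (-M) * Real.exp (-R) / 2) * S := by
    rw [integral_const_mul, hIg2]
  have hfinal : (1 / (2 * Real.exp M)) * Real.exp (-R) * S =
      (Real.exp (-M) * Real.exp (-R) / 2) * S := by
    simp only [Real.exp_neg]; ring
  calc (1 / (2 * Real.exp M)) * Real.exp (-R) * S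
      = (∫ x, (Real.exp (-M) * Real.exp (-R) / 2) * (g x) ^ 2 ∂μ) := by rw [hfinal, hIlow]
    _ ≤ ∫ x, Real.exp (u x) * (g x - 1 + Real.exp (-(g x))) ∂μ := hmono
    _ = _ := hIeq.symm
end

section
/- Lemma 3.2, inequality (3.3): let θ₀ ∈ ℝ^Λ, α_{0,λ} = ∫_E f_{θ₀} ψ_λ dμ, b = exp(‖log f_{θ₀}‖_∞), e = exp(1), and let α ∈ ℝ^Λ with ‖α − α₀‖₂ ≤ 1/(2·e·b·A). Then there exists θ(α) ∈ ℝ^Λ with ∫_E f_{θ(α)} ψ_λ dμ = α_λ for all λ ∈ Λ and Δ(f_{θ₀}; f_{θ(α)}) ≤ 2·e·b·‖α − α₀‖₂². -/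
open MeasureTheory Real

lemma quad_exp {w : ℝ} (hw : -2 ≤ w) : w ^ 2 / 4 ≤ Real.exp w - 1 - w := by
  have h1 := Real.add_one_le_exp (w / 2)
  have hsq : Real.exp (w / 2) * Real.exp (w / 2) = Real.exp w := by
    rw [← Real.exp_add]; ring_nf
  nlinarith [Real.exp_pos (w / 2)]

lemma exp_sub_exp_le {a b M : ℝ} (ha : |a| ≤ M) (hb : |b| ≤ M) :
    |Real.exp a - Real.exp b| ≤ Real.exp M * |a - b| := by
  rcases le_total a b with h | h
  · have h1 := Real.add_one_le_exp (a - b)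
    have h2 : Real.exp b ≤ Real.exp M := Real.exp_le_exp.2 (le_of_abs_le hb)
    have h3 : Real.exp b + (a - b) * Real.exp b ≤ Real.exp a := by
      have := mul_le_mul_of_nonneg_right h1 (Real.exp_pos b).le
      calc Real.exp b + (a-b) * Real.exp b = (a - b + 1) * Real.exp b := by ring
        _ ≤ Real.exp (a-b) * Real.exp b := this
        _ = Real.exp a := by rw [← Real.exp_add]; ring_nf
    rw [abs_of_nonpos (by linarith [Real.exp_le_exp.2 h] : Real.exp a - Real.exp b ≤ 0),
      abs_of_nonpos (by linarith : a - b ≤ 0)]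
    nlinarith [Real.exp_pos b]
  · have h1 := Real.add_one_le_exp (b - a)
    have h2 : Real.exp a ≤ Real.exp M := Real.exp_le_exp.2 (le_of_abs_le ha)
    have h3 : Real.exp a + (b - a) * Real.exp a ≤ Real.exp b := by
      have := mul_le_mul_of_nonneg_right h1 (Real.exp_pos a).le
      calc Real.exp a + (b-a) * Real.exp a = (b - a + 1) * Real.exp a := by ring
        _ ≤ Real.exp (b-a) * Real.exp a := this
        _ = Real.exp b := by rw [← Real.exp_add]; ring_nf
    rw [abs_of_nonneg (by linarith [Real.exp_le_exp.2 h] : (0:ℝ) ≤ Real.exp a - Real.exp b),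
      abs_of_nonneg (by linarith : (0:ℝ) ≤ a - b)]
    nlinarith [Real.exp_pos a]

lemma integrable_of_bdd {E : Type*} [MeasurableSpace E] {μ : Measure E} [IsFiniteMeasure μ]
    {f : E → ℝ} (hf : Measurable f) {B : ℝ} (hB : ∀ x, |f x| ≤ B) : Integrable f μ :=
  (integrable_const B).mono' hf.aestronglyMeasurable
    (Filter.Eventually.of_forall (by simpa [Real.norm_eq_abs] using hB))

set_option maxHeartbeats 1000000 in
/-- Lemma 3.2, inequality (3.3): under `‖α − α₀‖₂ ≤ 1/(2·e·b·A)` there exists `θ(α)`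
satisfying the moment equations and `Δ(f_{θ₀}; f_{θ(α)}) ≤ 2·e·b·‖α − α₀‖₂²`. -/
theorem information_projection_kl_bound
    {E : Type*} [MeasurableSpace E] (μ : Measure E) [IsFiniteMeasure μ]
    {Λ : Type*} [Fintype Λ] [DecidableEq Λ] (ψ : Λ → E → ℝ)
    (hmeas : ∀ l, Measurable (ψ l))
    (hbdd : ∀ l, ∃ C : ℝ, ∀ x, |ψ l x| ≤ C)
    (horth : ∀ l k, ∫ x, ψ l x * ψ k x ∂μ = if l = k then (1 : ℝ) else 0)
    (A : ℝ) (hApos : 0 < A)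
    (hA : ∀ c : Λ → ℝ, ∀ x, |∑ l, c l * ψ l x| ≤
      A * Real.sqrt (∫ y, (∑ l, c l * ψ l y) ^ 2 ∂μ))
    (θ₀ : Λ → ℝ) (α : Λ → ℝ)
    (hclose : Real.sqrt (∑ l,
        (α l - ∫ x, Real.exp (∑ l', θ₀ l' * ψ l' x) * ψ l x ∂μ) ^ 2) ≤
      1 / (2 * Real.exp 1 * Real.exp (⨆ x, |∑ l, θ₀ l * ψ l x|) * A)) :
    ∃ θα : Λ → ℝ, (∀ l, ∫ x, Real.exp (∑ l', θα l' * ψ l' x) * ψ l x ∂μ = α l) ∧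
      ∫ x, (Real.exp (∑ l, θ₀ l * ψ l x) *
          Real.log (Real.exp (∑ l, θ₀ l * ψ l x) / Real.exp (∑ l, θα l * ψ l x)) -
          Real.exp (∑ l, θ₀ l * ψ l x) + Real.exp (∑ l, θα l * ψ l x)) ∂μ ≤
        2 * Real.exp 1 * Real.exp (⨆ x, |∑ l, θ₀ l * ψ l x|) *
          (∑ l, (α l - ∫ x, Real.exp (∑ l', θ₀ l' * ψ l' x) * ψ l x ∂μ) ^ 2) := by
  classical
  -- bounds on ψ
  choose C0 hC0 using hbdd
  set C : Λ → ℝ := fun l => max (C0 l) 0 with hCdef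
  have hC : ∀ l x, |ψ l x| ≤ C l := fun l x => le_trans (hC0 l x) (le_max_left _ _)
  have hCnn : ∀ l, 0 ≤ C l := fun l => le_max_right _ _
  clear_value C
  -- the linear span map
  set s : (Λ → ℝ) → E → ℝ := fun θ x => ∑ l, θ l * ψ l x with hsdef
  have hs_apply : ∀ θ x, s θ x = ∑ l, θ l * ψ l x := fun θ x => by simp only [hsdef]
  clear_value s
  have hsmeas : ∀ θ, Measurable (s θ) := fun θ => by
    simp only [hsdef]; exact Finset.measurable_sum _ fun l _ => (hmeas l).const_mul (θ l)
  have hsbd : ∀ θ x, |s θ x| ≤ ∑ l, |θ l| * C l := by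
    intro θ x
    rw [hs_apply]
    refine (Finset.abs_sum_le_sum_abs _ _).trans (Finset.sum_le_sum fun l _ => ?_)
    rw [abs_mul]; exact mul_le_mul_of_nonneg_left (hC l x) (abs_nonneg _)
  -- integrability
  have hint : ∀ (θ : Λ → ℝ) (p : E → ℝ), Measurable p → ∀ B : ℝ, (∀ x, |p x| ≤ B) →
      Integrable (fun x => Real.exp (s θ x) * p x) μ := by
    intro θ p hp B hB
    refine integrable_of_bdd ((Real.measurable_exp.comp (hsmeas θ)).mul hp)
      (B := Real.exp (∑ l, |θ l| * C l) * B) (fun x => ?_)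
    rw [abs_mul, Real.abs_exp]
    exact mul_le_mul (Real.exp_le_exp.2 (le_of_abs_le (hsbd θ x))) (hB x) (abs_nonneg _)
      (Real.exp_nonneg _)
  have hintexp : ∀ θ, Integrable (fun x => Real.exp (s θ x)) μ := fun θ => by
    simpa using hint θ (fun _ => 1) measurable_const 1 (by simp)
  -- orthonormality: L2 norm of s c
  have hL1 : ∀ c : Λ → ℝ, ∫ x, (∑ l, c l * ψ l x) ^ 2 ∂μ = ∑ l, c l ^ 2 := by
    intro c
    have hip : ∀ l k : Λ, Integrable (fun x => (c l * c k) * (ψ l x * ψ k x)) μ := by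
      intro l k
      exact (integrable_of_bdd ((hmeas l).mul (hmeas k)) (B := C l * C k) fun x => by
        rw [Pi.mul_apply, abs_mul]
        exact mul_le_mul (hC l x) (hC k x) (abs_nonneg _) (hCnn l)).const_mul _
    have h1 : ∀ x : E, (∑ l, c l * ψ l x) ^ 2 = ∑ l, ∑ k, (c l * c k) * (ψ l x * ψ k x) := by
      intro x
      rw [sq, Finset.sum_mul_sum]
      exact Finset.sum_congr rfl fun l _ => Finset.sum_congr rfl fun k _ => by ring
    simp only [h1]
    rw [integral_finset_sum _ fun l _ => integrable_finset_sum _ fun k _ => hip l k]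
    calc ∑ l, ∫ x, ∑ k, (c l * c k) * (ψ l x * ψ k x) ∂μ
        = ∑ l, ∑ k, (c l * c k) * (if l = k then (1:ℝ) else 0) := by
          refine Finset.sum_congr rfl fun l _ => ?_
          rw [integral_finset_sum _ fun k _ => hip l k]
          exact Finset.sum_congr rfl fun k _ => by rw [integral_const_mul, horth l k]
      _ = ∑ l, c l ^ 2 := by
          refine Finset.sum_congr rfl fun l _ => ?_
          simp [mul_ite, Finset.sum_ite_eq, sq]
  have hA' : ∀ (c : Λ → ℝ) x, |s c x| ≤ A * Real.sqrt (∑ l, c l ^ 2) := by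
    intro c x
    have h := hA c x
    rw [hL1 c] at h
    rw [hs_apply]; exact h
  -- Cauchy-Schwarz for sums
  have hCS : ∀ u v : Λ → ℝ, ∑ l, u l * v l ≤
      Real.sqrt (∑ l, u l ^ 2) * Real.sqrt (∑ l, v l ^ 2) := by
    intro u v
    have h := Finset.sum_mul_sq_le_sq_mul_sq Finset.univ u v
    have h2 : |∑ l, u l * v l| ≤ Real.sqrt ((∑ l, u l ^ 2) * ∑ l, v l ^ 2) := by
      rw [← Real.sqrt_sq_eq_abs]; exact Real.sqrt_le_sqrt h
    calc ∑ l, u l * v l ≤ |∑ l, u l * v l| := le_abs_self _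
      _ ≤ _ := by rwa [Real.sqrt_mul (by positivity)] at h2
  -- constants
  set b : ℝ := Real.exp (⨆ x, |∑ l, θ₀ l * ψ l x|) with hbdef
  have hbpos : 0 < b := Real.exp_pos _
  have hbA : ∀ x, 1 / b ≤ Real.exp (s θ₀ x) := by
    intro x
    have hbdd2 : BddAbove (Set.range fun x => |∑ l, θ₀ l * ψ l x|) := by
      refine ⟨A * Real.sqrt (∑ l, θ₀ l ^ 2), ?_⟩
      rintro _ ⟨y, rfl⟩
      have := hA' θ₀ y; rwa [hs_apply] at this
    have h1 : |∑ l, θ₀ l * ψ l x| ≤ ⨆ x', |∑ l, θ₀ l * ψ l x'| := le_ciSup hbdd2 x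
    rw [hbdef, one_div, ← Real.exp_neg]
    apply Real.exp_le_exp.2
    rw [hs_apply]
    linarith [(abs_le.1 h1).1]
  set α₀ : Λ → ℝ := fun l => ∫ x, Real.exp (∑ l', θ₀ l' * ψ l' x) * ψ l x ∂μ with hα₀def
  have hα₀ : ∀ l, ∫ x, Real.exp (s θ₀ x) * ψ l x ∂μ = α₀ l := by
    intro l; simp only [hsdef, hα₀def]
  clear_value b α₀
  set ε : ℝ := Real.sqrt (∑ l, (α l - α₀ l) ^ 2) with hεdef
  have hε0 : 0 ≤ ε := Real.sqrt_nonneg _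
  have hε2 : ε ^ 2 = ∑ l, (α l - α₀ l) ^ 2 := Real.sq_sqrt (by positivity)
  have hεle : ε ≤ 1 / (2 * Real.exp 1 * b * A) := by
    rw [hεdef]; simp only [hα₀def]; exact hclose
  clear_value ε
  have he1 : (2:ℝ) ≤ Real.exp 1 := by have := Real.add_one_le_exp 1; linarith
  -- the ball
  set r : ℝ := 2 / A with hrdef
  have hrpos : 0 < r := by positivity
  set S : Set (Λ → ℝ) := {θ | ∑ l, (θ l - θ₀ l) ^ 2 ≤ r ^ 2} with hSdef
  have hθ₀S : θ₀ ∈ S := by simp only [hSdef, Set.mem_setOf_eq]; simp; positivity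
  clear_value r S
  have hScompact : IsCompact S := by
    have hclosed : IsClosed S := by
      rw [hSdef]
      exact isClosed_le
        (continuous_finset_sum _ fun l _ => ((continuous_apply l).sub continuous_const).pow 2)
        continuous_const
    have hsub : S ⊆ Metric.closedBall θ₀ r := by
      intro θ hθ
      rw [hSdef] at hθ
      simp only [Set.mem_setOf_eq] at hθ
      rw [Metric.mem_closedBall, dist_pi_le_iff hrpos.le]
      intro l
      rw [Real.dist_eq, ← Real.sqrt_sq_eq_abs, ← Real.sqrt_sq hrpos.le]
      exact Real.sqrt_le_sqrt (le_trans (Finset.single_le_sum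
        (f := fun l => (θ l - θ₀ l) ^ 2) (fun i _ => sq_nonneg _) (Finset.mem_univ l)) hθ)
    exact (isCompact_closedBall θ₀ r).of_isClosed_subset hclosed hsub
  -- uniform bound on exponents over S
  have hSexp : ∀ θ ∈ S, ∀ x, |s θ x| ≤ A * Real.sqrt (∑ l, θ₀ l ^ 2) + 2 := by
    intro θ hθ x
    have hθ' : ∑ l, (θ l - θ₀ l) ^ 2 ≤ r ^ 2 := by rw [hSdef] at hθ; exact hθ
    have hsp : s θ x = s θ₀ x + s (fun l => θ l - θ₀ l) x := by
      simp only [hs_apply, ← Finset.sum_add_distrib]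
      exact Finset.sum_congr rfl fun l _ => by ring
    have h1 := hA' θ₀ x
    have h2 := hA' (fun l => θ l - θ₀ l) x
    have h3 : Real.sqrt (∑ l, (θ l - θ₀ l) ^ 2) ≤ r := by
      rw [← Real.sqrt_sq hrpos.le]; exact Real.sqrt_le_sqrt hθ'
    have h4 : A * Real.sqrt (∑ l, (θ l - θ₀ l) ^ 2) ≤ 2 := by
      calc A * Real.sqrt (∑ l, (θ l - θ₀ l) ^ 2) ≤ A * r := by nlinarith
        _ = 2 := by rw [hrdef]; field_simp
    rw [hsp]
    calc |s θ₀ x + s (fun l => θ l - θ₀ l) x|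
        ≤ |s θ₀ x| + |s (fun l => θ l - θ₀ l) x| := abs_add_le _ _
      _ ≤ A * Real.sqrt (∑ l, θ₀ l ^ 2) + 2 := add_le_add h1 (le_trans h2 h4)
  set F : (Λ → ℝ) → ℝ := fun θ => (∫ x, Real.exp (s θ x) ∂μ) - ∑ l, α l * θ l with hFdef
  have hFcont : ContinuousOn F S := by
    have hCC0 : (0:ℝ) ≤ ∑ l, C l := Finset.sum_nonneg fun l _ => hCnn l
    set M : ℝ := A * Real.sqrt (∑ l, θ₀ l ^ 2) + 2 with hMdef
    set K : ℝ := (μ Set.univ).toReal * (Real.exp M * ∑ l, C l) + ∑ l, |α l| with hKdef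
    have hK0 : 0 ≤ K := by
      rw [hKdef]
      have : (0:ℝ) ≤ (μ Set.univ).toReal := ENNReal.toReal_nonneg
      positivity
    have key : ∀ θ ∈ S, ∀ θ' ∈ S, dist (F θ) (F θ') ≤ K * dist θ θ' := by
      intro θ hθ θ' hθ'
      have hptw : ∀ x, |Real.exp (s θ x) - Real.exp (s θ' x)| ≤
          Real.exp M * (∑ l, C l) * dist θ θ' := by
        intro x
        have h1 := exp_sub_exp_le (hSexp θ hθ x) (hSexp θ' hθ' x)
        have h2 : |s θ x - s θ' x| ≤ (∑ l, C l) * dist θ θ' := by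
          have he : s θ x - s θ' x = ∑ l, (θ l - θ' l) * ψ l x := by
            simp only [hs_apply, ← Finset.sum_sub_distrib]
            exact Finset.sum_congr rfl fun l _ => by ring
          rw [he, Finset.sum_mul]
          refine (Finset.abs_sum_le_sum_abs _ _).trans (Finset.sum_le_sum fun l _ => ?_)
          rw [abs_mul]
          have hl1 : |θ l - θ' l| ≤ dist θ θ' := by
            rw [← Real.dist_eq]; exact dist_le_pi_dist θ θ' l
          calc |θ l - θ' l| * |ψ l x| ≤ dist θ θ' * C l :=
                mul_le_mul hl1 (hC l x) (abs_nonneg _) dist_nonneg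
            _ = C l * dist θ θ' := by ring
        calc |Real.exp (s θ x) - Real.exp (s θ' x)|
            ≤ Real.exp M * |s θ x - s θ' x| := by rw [hMdef]; exact h1
          _ ≤ Real.exp M * ((∑ l, C l) * dist θ θ') :=
              mul_le_mul_of_nonneg_left h2 (Real.exp_nonneg _)
          _ = Real.exp M * (∑ l, C l) * dist θ θ' := by ring
      have hIle : |(∫ x, Real.exp (s θ x) ∂μ) - ∫ x, Real.exp (s θ' x) ∂μ| ≤
          (μ Set.univ).toReal * (Real.exp M * ∑ l, C l) * dist θ θ' := by
        rw [← integral_sub (hintexp θ) (hintexp θ')]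
        calc |∫ x, (Real.exp (s θ x) - Real.exp (s θ' x)) ∂μ|
            ≤ ∫ x, |Real.exp (s θ x) - Real.exp (s θ' x)| ∂μ := by
              simpa [Real.norm_eq_abs] using
                norm_integral_le_integral_norm (μ := μ)
                  (fun x => Real.exp (s θ x) - Real.exp (s θ' x))
          _ ≤ ∫ _x, Real.exp M * (∑ l, C l) * dist θ θ' ∂μ :=
              integral_mono (((hintexp θ).sub (hintexp θ')).abs) (integrable_const _)
                hptw
          _ = (μ Set.univ).toReal * (Real.exp M * (∑ l, C l) * dist θ θ') := by
              rw [integral_const]; simp [smul_eq_mul, Measure.real]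
          _ = (μ Set.univ).toReal * (Real.exp M * ∑ l, C l) * dist θ θ' := by ring
      have hsum : |∑ l, α l * θ l - ∑ l, α l * θ' l| ≤ (∑ l, |α l|) * dist θ θ' := by
        rw [← Finset.sum_sub_distrib, Finset.sum_mul]
        refine (Finset.abs_sum_le_sum_abs _ _).trans (Finset.sum_le_sum fun l _ => ?_)
        have he : α l * θ l - α l * θ' l = α l * (θ l - θ' l) := by ring
        rw [he, abs_mul]
        refine mul_le_mul_of_nonneg_left ?_ (abs_nonneg _)
        rw [← Real.dist_eq]; exact dist_le_pi_dist θ θ' l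
      rw [Real.dist_eq]
      simp only [hFdef]
      have he2 : (∫ x, Real.exp (s θ x) ∂μ) - ∑ l, α l * θ l -
          ((∫ x, Real.exp (s θ' x) ∂μ) - ∑ l, α l * θ' l)
          = ((∫ x, Real.exp (s θ x) ∂μ) - ∫ x, Real.exp (s θ' x) ∂μ) -
            (∑ l, α l * θ l - ∑ l, α l * θ' l) := by ring
      rw [he2]
      have htri := abs_sub ((∫ x, Real.exp (s θ x) ∂μ) - ∫ x, Real.exp (s θ' x) ∂μ)
        (∑ l, α l * θ l - ∑ l, α l * θ' l)
      have hKd : K * dist θ θ' = (μ Set.univ).toReal * (Real.exp M * ∑ l, C l) * dist θ θ'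
          + (∑ l, |α l|) * dist θ θ' := by rw [hKdef]; ring
      linarith
    have hlip : LipschitzOnWith K.toNNReal F S := by
      refine LipschitzOnWith.of_dist_le_mul fun θ hθ θ' hθ' => ?_
      rw [Real.coe_toNNReal K hK0]
      exact key θ hθ θ' hθ'
    exact hlip.continuousOn
  clear_value F
  obtain ⟨θs, hθsS, hmin⟩ := hScompact.exists_isMinOn ⟨θ₀, hθ₀S⟩ hFcont
  rw [isMinOn_iff] at hmin
  set δ : Λ → ℝ := fun l => θs l - θ₀ l with hδdef
  set d : ℝ := Real.sqrt (∑ l, δ l ^ 2) with hddef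
  have hd0 : 0 ≤ d := Real.sqrt_nonneg _
  have hd2 : d ^ 2 = ∑ l, δ l ^ 2 := Real.sq_sqrt (by positivity)
  clear_value d
  have hθsS2 : ∑ l, δ l ^ 2 ≤ r ^ 2 := by
    have h := hθsS
    rw [hSdef] at h
    simp only [Set.mem_setOf_eq] at h
    simp only [hδdef]
    exact h
  have hδd : ∀ l, |δ l| ≤ d := by
    intro l
    rw [hddef, ← Real.sqrt_sq_eq_abs]
    exact Real.sqrt_le_sqrt (Finset.single_le_sum (f := fun l => δ l ^ 2)
      (fun i _ => sq_nonneg _) (Finset.mem_univ l))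
  have hsplit : ∀ x, s θs x = s θ₀ x + s δ x := by
    intro x; simp only [hs_apply, hδdef, ← Finset.sum_add_distrib]
    exact Finset.sum_congr rfl fun l _ => by ring
  have hsδbd : ∀ x, |s δ x| ≤ 2 := by
    intro x
    have h1 := hA' δ x
    have h2 : Real.sqrt (∑ l, δ l ^ 2) ≤ r := by
      rw [← Real.sqrt_sq hrpos.le]
      exact Real.sqrt_le_sqrt hθsS2
    calc |s δ x| ≤ A * Real.sqrt (∑ l, δ l ^ 2) := h1
      _ ≤ A * r := by nlinarith
      _ = 2 := by rw [hrdef]; field_simp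
  have hdr : d ≤ r := by
    rw [hddef, ← Real.sqrt_sq hrpos.le]
    exact Real.sqrt_le_sqrt hθsS2
  -- linearity of the moment integral
  have hlin : ∫ x, Real.exp (s θ₀ x) * s δ x ∂μ = ∑ l, δ l * α₀ l := by
    have h1 : ∀ x, Real.exp (s θ₀ x) * s δ x = ∑ l, δ l * (Real.exp (s θ₀ x) * ψ l x) := by
      intro x
      rw [hs_apply δ, Finset.mul_sum]
      exact Finset.sum_congr rfl fun l _ => by ring
    simp only [h1]
    rw [integral_finset_sum _ fun l _ => (hint θ₀ (ψ l) (hmeas l) (C l) (hC l)).const_mul _]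
    exact Finset.sum_congr rfl fun l _ => by rw [integral_const_mul, hα₀ l]
  -- strong convexity
  have hG : ∫ x, (Real.exp (s θs x) - Real.exp (s θ₀ x) - Real.exp (s θ₀ x) * s δ x) ∂μ
      = (∫ x, Real.exp (s θs x) ∂μ) - (∫ x, Real.exp (s θ₀ x) ∂μ) - ∑ l, δ l * α₀ l := by
    have h1 := integral_sub (f := fun x => Real.exp (s θs x) - Real.exp (s θ₀ x))
      (g := fun x => Real.exp (s θ₀ x) * s δ x)
      ((hintexp θs).sub (hintexp θ₀)) (hint θ₀ (s δ) (hsmeas δ) 2 hsδbd)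
    have h2 := integral_sub (f := fun x => Real.exp (s θs x))
      (g := fun x => Real.exp (s θ₀ x)) (hintexp θs) (hintexp θ₀)
    rw [h1, h2, hlin]
  have hsc : (∑ l, δ l ^ 2) / (4 * b) ≤
      (∫ x, Real.exp (s θs x) ∂μ) - (∫ x, Real.exp (s θ₀ x) ∂μ) - ∑ l, δ l * α₀ l := by
    have hptw : ∀ x, 1 / (4 * b) * (s δ x) ^ 2 ≤
        Real.exp (s θs x) - Real.exp (s θ₀ x) - Real.exp (s θ₀ x) * s δ x := by
      intro x
      have hw : -2 ≤ s δ x := (abs_le.1 (hsδbd x)).1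
      have hq := quad_exp hw
      have hEpos := Real.exp_pos (s θ₀ x)
      have hexp : Real.exp (s θs x) = Real.exp (s θ₀ x) * Real.exp (s δ x) := by
        rw [hsplit x, Real.exp_add]
      have h2 : Real.exp (s θ₀ x) * ((s δ x) ^ 2 / 4) ≤
          Real.exp (s θ₀ x) * (Real.exp (s δ x) - 1 - s δ x) :=
        mul_le_mul_of_nonneg_left hq hEpos.le
      have h3 : 1 / b * ((s δ x) ^ 2 / 4) ≤ Real.exp (s θ₀ x) * ((s δ x) ^ 2 / 4) :=
        mul_le_mul_of_nonneg_right (hbA x) (by positivity)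
      have h4 : Real.exp (s θ₀ x) * (Real.exp (s δ x) - 1 - s δ x)
          = Real.exp (s θ₀ x) * Real.exp (s δ x) - Real.exp (s θ₀ x)
            - Real.exp (s θ₀ x) * s δ x := by ring
      have h5 : 1 / (4 * b) * (s δ x) ^ 2 = 1 / b * ((s δ x) ^ 2 / 4) := by ring
      rw [hexp, h5]
      linarith
    have hisq : Integrable (fun x => (s δ x) ^ 2) μ := by
      refine integrable_of_bdd ((hsmeas δ).pow_const 2) (B := (∑ l, |δ l| * C l) ^ 2)
        fun x => ?_
      rw [abs_pow]
      exact pow_le_pow_left₀ (abs_nonneg _) (hsbd δ x) 2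
    have hIle := integral_mono (hisq.const_mul (1 / (4 * b)))
      (((hintexp θs).sub (hintexp θ₀)).sub (hint θ₀ (s δ) (hsmeas δ) 2 hsδbd)) hptw
    rw [← hG]
    have hL : ∫ x, 1 / (4 * b) * (s δ x) ^ 2 ∂μ = (∑ l, δ l ^ 2) / (4 * b) := by
      rw [integral_const_mul]
      have hs2 : ∫ x, (s δ x) ^ 2 ∂μ = ∑ l, δ l ^ 2 := by
        simp only [hs_apply]; exact hL1 δ
      rw [hs2]; ring
    rw [← hL]
    exact hIle
  -- key bound from minimality
  have hFmin : F θs ≤ F θ₀ := hmin θ₀ hθ₀S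
  have hsum1 : ∑ l, δ l * α₀ l + ∑ l, (α l - α₀ l) * δ l
      = ∑ l, α l * θs l - ∑ l, α l * θ₀ l := by
    rw [← Finset.sum_add_distrib, ← Finset.sum_sub_distrib]
    exact Finset.sum_congr rfl fun l _ => by simp only [hδdef]; ring
  have hCSad : ∑ l, (α l - α₀ l) * δ l ≤ ε * d := by
    have h := hCS (fun l => α l - α₀ l) δ
    simpa only [← hεdef, ← hddef] using h
  have hkey : (∑ l, δ l ^ 2) / (4 * b) ≤ ε * d := by
    have hF1 : (∫ x, Real.exp (s θs x) ∂μ) - ∑ l, α l * θs l ≤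
        (∫ x, Real.exp (s θ₀ x) ∂μ) - ∑ l, α l * θ₀ l := by
      simpa only [hFdef] using hFmin
    linarith [hsc, hsum1, hCSad]
  have hd4 : d ≤ 4 * b * ε := by
    rcases eq_or_lt_of_le hd0 with h | h
    · rw [← h]; positivity
    · rw [← hd2, div_le_iff₀ (by positivity : (0:ℝ) < 4 * b)] at hkey
      have : d * d ≤ (4 * b * ε) * d := by nlinarith [hkey]
      exact le_of_mul_le_mul_right this h
  have hdlt : d < r := by
    have h1 : 4 * b * ε ≤ 4 * b * (1 / (2 * Real.exp 1 * b * A)) := by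
      apply mul_le_mul_of_nonneg_left hεle (by positivity)
    have h2 : 4 * b * (1 / (2 * Real.exp 1 * b * A)) = 2 / (Real.exp 1 * A) := by
      field_simp; ring
    have h3 : 2 / (Real.exp 1 * A) < 2 / A := by
      apply div_lt_div_of_pos_left (by norm_num) hApos
      nlinarith
    rw [hrdef]
    calc d ≤ 4 * b * ε := hd4
      _ ≤ 2 / (Real.exp 1 * A) := by rw [← h2]; exact h1
      _ < 2 / A := h3
  -- stationarity: the moment equations
  have hmom : ∀ l, ∫ x, Real.exp (s θs x) * ψ l x ∂μ = α l := by
    intro l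
    have hCl1 : (0:ℝ) < C l + 1 := by linarith [hCnn l]
    set q : ℝ := (∫ x, Real.exp (s θs x) * ψ l x ∂μ) - α l with hqdef
    set K : ℝ := ∫ x, Real.exp (s θs x) * ψ l x ^ 2 ∂μ with hKdef
    have hK0 : 0 ≤ K := by
      rw [hKdef]; exact integral_nonneg fun x => by positivity
    set τ : ℝ := min (r - d) (1 / (C l + 1)) with hτdef
    have hτpos : 0 < τ := lt_min (by linarith) (div_pos one_pos hCl1)
    have hstep : ∀ t : ℝ, |t| ≤ τ → 0 ≤ t * q + t ^ 2 * K := by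
      intro t ht
      have htr : |t| ≤ r - d := le_trans ht (by rw [hτdef]; exact min_le_left _ _)
      have htC : |t| ≤ 1 / (C l + 1) := le_trans ht (by rw [hτdef]; exact min_le_right _ _)
      set θt : Λ → ℝ := fun l' => θs l' + if l' = l then t else 0 with hθtdef
      have hsθt : ∀ x, s θt x = s θs x + t * ψ l x := by
        intro x
        simp only [hs_apply, hθtdef]
        have he : ∀ l', (θs l' + if l' = l then t else 0) * ψ l' x
            = θs l' * ψ l' x + (if l' = l then t * ψ l' x else 0) := by
          intro l'
          by_cases h : l' = l
          · simp only [if_pos h]; ring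
          · simp only [if_neg h]; ring
        simp only [he]
        rw [Finset.sum_add_distrib, Finset.sum_ite_eq' Finset.univ l fun l' => t * ψ l' x]
        simp
      have hθtS : θt ∈ S := by
        rw [hSdef]
        simp only [Set.mem_setOf_eq, hθtdef]
        have expand : ∀ l', (θs l' + (if l' = l then t else 0) - θ₀ l') ^ 2
            = δ l' ^ 2 + (if l' = l then 2 * t * δ l + t ^ 2 else 0) := by
          intro l'
          by_cases h : l' = l
          · rw [if_pos h, if_pos h, h]
            simp only [hδdef]
            ring
          · rw [if_neg h, if_neg h]
            simp only [hδdef]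
            ring
        simp only [expand]
        rw [Finset.sum_add_distrib, Finset.sum_ite_eq' Finset.univ l fun _ => 2 * t * δ l + t ^ 2]
        simp only [Finset.mem_univ, if_true]
        have e1 : t * δ l ≤ |t| * d := by
          calc t * δ l ≤ |t * δ l| := le_abs_self _
            _ = |t| * |δ l| := abs_mul _ _
            _ ≤ |t| * d := mul_le_mul_of_nonneg_left (hδd l) (abs_nonneg t)
        have e2 : t ^ 2 = |t| ^ 2 := (sq_abs t).symm
        have e3 : d + |t| ≤ r := by linarith
        have e4 : ∑ l', δ l' ^ 2 = d ^ 2 := hd2.symm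
        have h5 : (d + |t|) ^ 2 ≤ r ^ 2 :=
          pow_le_pow_left₀ (by positivity) e3 2
        rw [e4]
        nlinarith [h5, e1, e2]
      have hFle : F θs ≤ F θt := hmin θt hθtS
      have hpt : ∀ x, Real.exp (s θt x) - Real.exp (s θs x) ≤
          t * (Real.exp (s θs x) * ψ l x) + t ^ 2 * (Real.exp (s θs x) * ψ l x ^ 2) := by
        intro x
        have hh : |t * ψ l x| ≤ 1 := by
          rw [abs_mul]
          calc |t| * |ψ l x| ≤ (1 / (C l + 1)) * C l :=
              mul_le_mul htC (hC l x) (abs_nonneg _) (by positivity)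
            _ ≤ 1 := by
              rw [div_mul_eq_mul_div, div_le_one hCl1]
              linarith [hCnn l]
        have h2 := (abs_le.1 (Real.abs_exp_sub_one_sub_id_le hh)).2
        have hE := Real.exp_pos (s θs x)
        have hexp : Real.exp (s θt x) = Real.exp (s θs x) * Real.exp (t * ψ l x) := by
          rw [hsθt x, Real.exp_add]
        have h3 : Real.exp (s θs x) * (Real.exp (t * ψ l x) - 1 - t * ψ l x) ≤
            Real.exp (s θs x) * (t * ψ l x) ^ 2 := mul_le_mul_of_nonneg_left h2 hE.le
        rw [hexp]
        nlinarith [h3]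
      have hi2a : Integrable (fun x => Real.exp (s θs x) * ψ l x) μ :=
        hint θs (ψ l) (hmeas l) (C l) (hC l)
      have hi2b : Integrable (fun x => Real.exp (s θs x) * ψ l x ^ 2) μ :=
        hint θs (fun x => ψ l x ^ 2) ((hmeas l).pow_const 2) (C l ^ 2) fun x => by
          rw [abs_pow]
          exact pow_le_pow_left₀ (abs_nonneg _) (hC l x) 2
      have hIle : (∫ x, Real.exp (s θt x) ∂μ) - (∫ x, Real.exp (s θs x) ∂μ) ≤
          t * (∫ x, Real.exp (s θs x) * ψ l x ∂μ) + t ^ 2 * K := by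
        have hi1 : Integrable (fun x => Real.exp (s θt x) - Real.exp (s θs x)) μ :=
          (hintexp θt).sub (hintexp θs)
        have hi2 : Integrable (fun x => t * (Real.exp (s θs x) * ψ l x)
            + t ^ 2 * (Real.exp (s θs x) * ψ l x ^ 2)) μ :=
          (hi2a.const_mul t).add (hi2b.const_mul (t ^ 2))
        have hmono := integral_mono hi1 hi2 hpt
        have hes := integral_sub (f := fun x => Real.exp (s θt x))
          (g := fun x => Real.exp (s θs x)) (hintexp θt) (hintexp θs)
        have hea := integral_add (f := fun x => t * (Real.exp (s θs x) * ψ l x))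
          (g := fun x => t ^ 2 * (Real.exp (s θs x) * ψ l x ^ 2))
          (hi2a.const_mul t) (hi2b.const_mul (t ^ 2))
        rw [hes, hea, integral_const_mul, integral_const_mul] at hmono
        rw [hKdef]
        exact hmono
      have hlinα : ∑ l', α l' * θt l' = (∑ l', α l' * θs l') + t * α l := by
        simp only [hθtdef, mul_add, Finset.sum_add_distrib, mul_ite, mul_zero]
        rw [Finset.sum_ite_eq' Finset.univ l fun l' => α l' * t]
        simp [mul_comm]
      have hF2 : (∫ x, Real.exp (s θs x) ∂μ) - ∑ l', α l' * θs l' ≤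
          (∫ x, Real.exp (s θt x) ∂μ) - ∑ l', α l' * θt l' := by
        simpa only [hFdef] using hFle
      rw [hqdef]
      linarith
    have habs : ∀ t : ℝ, 0 < t → t ≤ τ → |q| ≤ t * K := by
      intro t ht0 htτ
      have h1 := hstep t (by rw [abs_of_pos ht0]; exact htτ)
      have h2 := hstep (-t) (by rw [abs_neg, abs_of_pos ht0]; exact htτ)
      rw [abs_le]
      constructor <;> nlinarith [h1, h2]
    have hq0 : q = 0 := by
      by_contra hne
      have hqpos : 0 < |q| := abs_pos.2 hne
      have hKpos : 0 < K := by
        rcases hK0.lt_or_eq with h | h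
        · exact h
        · exfalso
          have h1 := habs τ hτpos le_rfl
          rw [← h, mul_zero] at h1
          exact absurd (le_antisymm h1 (abs_nonneg q)) fun hh => hne (abs_eq_zero.1 hh)
      have h1 := habs (min τ (|q| / (2 * K))) (lt_min hτpos (by positivity)) (min_le_left _ _)
      have h2 : min τ (|q| / (2 * K)) * K ≤ |q| / 2 := by
        calc min τ (|q| / (2 * K)) * K ≤ (|q| / (2 * K)) * K :=
              mul_le_mul_of_nonneg_right (min_le_right _ _) hK0
          _ = |q| / 2 := by field_simp [hKpos.ne']
      linarith
    rw [hqdef] at hq0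
    linarith
  -- the KL divergence identity and final bound
  have hΔeq : ∫ x, (Real.exp (s θ₀ x) *
        Real.log (Real.exp (s θ₀ x) / Real.exp (s θs x)) -
        Real.exp (s θ₀ x) + Real.exp (s θs x)) ∂μ
      = (∫ x, Real.exp (s θs x) ∂μ) - (∫ x, Real.exp (s θ₀ x) ∂μ) - ∑ l, δ l * α₀ l := by
    have h1 : ∀ x, Real.exp (s θ₀ x) *
        Real.log (Real.exp (s θ₀ x) / Real.exp (s θs x)) -
        Real.exp (s θ₀ x) + Real.exp (s θs x)
        = Real.exp (s θs x) - Real.exp (s θ₀ x) - Real.exp (s θ₀ x) * s δ x := by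
      intro x
      have hlog : Real.log (Real.exp (s θ₀ x) / Real.exp (s θs x)) = s θ₀ x - s θs x := by
        rw [← Real.exp_sub, Real.log_exp]
      rw [hlog]
      have hss := hsplit x
      linear_combination (-Real.exp (s θ₀ x)) * hss
    simp only [h1]
    exact hG
  have hfin : ∫ x, (Real.exp (s θ₀ x) *
        Real.log (Real.exp (s θ₀ x) / Real.exp (s θs x)) -
        Real.exp (s θ₀ x) + Real.exp (s θs x)) ∂μ
      ≤ 2 * Real.exp 1 * b * ∑ l, (α l - α₀ l) ^ 2 := by
    rw [hΔeq]
    have hD : (∫ x, Real.exp (s θs x) ∂μ) - (∫ x, Real.exp (s θ₀ x) ∂μ) - ∑ l, δ l * α₀ l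
        ≤ ∑ l, (α l - α₀ l) * δ l := by
      have hF1 : (∫ x, Real.exp (s θs x) ∂μ) - ∑ l, α l * θs l ≤
          (∫ x, Real.exp (s θ₀ x) ∂μ) - ∑ l, α l * θ₀ l := by
        simpa only [hFdef] using hFmin
      linarith [hsum1]
    have h2 : ∑ l, (α l - α₀ l) * δ l ≤ ε * (4 * b * ε) := by
      calc ∑ l, (α l - α₀ l) * δ l ≤ ε * d := hCSad
        _ ≤ ε * (4 * b * ε) := mul_le_mul_of_nonneg_left hd4 hε0
    have h3 : ε * (4 * b * ε) ≤ 2 * Real.exp 1 * b * ε ^ 2 := by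
      have h4 : 2 * (b * ε ^ 2) ≤ Real.exp 1 * (b * ε ^ 2) :=
        mul_le_mul_of_nonneg_right he1 (by positivity)
      have h5 : ε * (4 * b * ε) = 4 * (b * ε ^ 2) := by ring
      have h6 : 2 * Real.exp 1 * b * ε ^ 2 = 2 * (Real.exp 1 * (b * ε ^ 2)) := by ring
      linarith
    rw [← hε2]
    linarith
  refine ⟨θs, fun l => ?_, ?_⟩
  · have := hmom l
    simpa only [hsdef] using this
  · simpa only [hsdef, hα₀def] using hfin
end
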